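/- Let S be a weakly η-sparse family of cubes in ℝ^N and let f ∈ L¹(ℝ^N; ℝ^d) be compactly supported. Then for almost every x ∈ ℝ^N the set 𝐋_S f(x) := Σ_{Q∈S} ⟨⟨f⟩⟩_Q 1_Q(x) (Minkowski sum) is a bounded convex symmetric subset of ℝ^d. -/

import Mathlib

open MeasureTheory Set Matrix
open scoped ENNReal BigOperators NNReal

noncomputable section

namespace CBD

/-- The Euclidean norm of a vector in `ℝ^n` given as a plain function. -/
def vnorm {n : ℕ} (v : Fin n → ℝ) : ℝ := Real.sqrt (∑ i, v i ^ 2)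

/-- An axis-parallel half-open cube in `ℝ^N`. -/
structure Cube (N : ℕ) where
  corner : Fin N → ℝ
  side : ℝ
  side_pos : 0 < side

namespace Cube

variable {N : ℕ}

/-- The subset of `ℝ^N` determined by the cube. -/
def set (Q : Cube N) : Set (Fin N → ℝ) :=
  {x | ∀ i, Q.corner i ≤ x i ∧ x i < Q.corner i + Q.side}

/-- The volume `|Q|` of the cube. -/
def vol (Q : Cube N) : ℝ := Q.side ^ N

/-- The concentric dilation `rQ` (intended for `r ≥ 1`; implemented with `max r 1`). -/
def dilate (Q : Cube N) (r : ℝ) : Cube N where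
  corner := fun i => Q.corner i + Q.side / 2 - max r 1 * Q.side / 2
  side := max r 1 * Q.side
  side_pos := mul_pos (lt_of_lt_of_le one_pos (le_max_right r 1)) Q.side_pos

/-- `Q` belongs to the standard dyadic lattice `D`:
`Q = 2^{-k}([0,1)^N + m)` for some `k ∈ ℤ`, `m ∈ ℤ^N`. -/
def IsDyadic (Q : Cube N) : Prop :=
  ∃ (k : ℤ) (m : Fin N → ℤ), Q.side = (2:ℝ) ^ (-k) ∧ ∀ i, Q.corner i = (2:ℝ) ^ (-k) * (m i : ℝ)

/-- The subcube of `Q` of dyadic generation `k` in position `m`. -/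
def subCube (Q : Cube N) (k : ℕ) (m : Fin N → ℕ) : Cube N where
  corner := fun i => Q.corner i + Q.side * (m i : ℝ) / 2 ^ k
  side := Q.side / 2 ^ k
  side_pos := div_pos Q.side_pos (by positivity)

/-- `R` is a dyadic subcube of `Q` (relative dyadic lattice `D(Q)`, including `Q` itself). -/
def IsDyadicSub (Q R : Cube N) : Prop :=
  ∃ (k : ℕ) (m : Fin N → ℕ), (∀ i, m i < 2 ^ k) ∧ R = Q.subCube k m

end Cube

variable {N d : ℕ}

/-- The dyadic lattice, as a set of cubes. -/
def dyadicCubes (N : ℕ) : Set (Cube N) := {Q | Q.IsDyadic}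

/-- All cubes in `ℝ^N`. -/
def allCubes (N : ℕ) : Set (Cube N) := Set.univ

/-- The average `⟨g⟩_Q = |Q|⁻¹ ∫_Q g`. -/
def avg (Q : Cube N) (g : (Fin N → ℝ) → ℝ) : ℝ :=
  (Q.vol)⁻¹ * ∫ y in Q.set, g y

/-- The entrywise average `⟨W⟩_Q` of a matrix-valued function. -/
def matAvg (Q : Cube N) (W : (Fin N → ℝ) → Matrix (Fin d) (Fin d) ℝ) :
    Matrix (Fin d) (Fin d) ℝ :=
  Matrix.of fun i j => avg Q fun x => W x i j

/-- The positive semidefinite square root of a matrix (junk value `0` off psd matrices). -/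
def msqrt (A : Matrix (Fin d) (Fin d) ℝ) : Matrix (Fin d) (Fin d) ℝ :=
  letI := Classical.dec A.PosSemidef
  if h : A.PosSemidef then
    (h.1.eigenvectorUnitary : Matrix (Fin d) (Fin d) ℝ) *
      Matrix.diagonal (RCLike.ofReal ∘ Real.sqrt ∘ h.1.eigenvalues) *
      (star h.1.eigenvectorUnitary : Matrix (Fin d) (Fin d) ℝ)
  else 0

/-- The `ℓ² → ℓ²` operator norm of a `d × d` matrix. -/
def matOpNorm (A : Matrix (Fin d) (Fin d) ℝ) : ℝ :=
  sSup {t | ∃ v : Fin d → ℝ, vnorm v ≤ 1 ∧ t = vnorm (A.mulVec v)}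

/-- A `d`-dimensional matrix weight: locally integrable, positive semidefinite values. -/
def IsMatrixWeight (W : (Fin N → ℝ) → Matrix (Fin d) (Fin d) ℝ) : Prop :=
  (∀ x, (W x).PosSemidef) ∧ ∀ i j, LocallyIntegrable (fun x => W x i j) volume

/-- A scalar weight: nonnegative and locally integrable. -/
def IsScalarWeight (w : (Fin N → ℝ) → ℝ) : Prop :=
  (∀ x, 0 ≤ w x) ∧ LocallyIntegrable w volume

/-- The maximal function adapted to the cube `Q`:
`M_Q w(x) = sup {⟨w⟩_R : R ∈ D(Q), x ∈ R}` (and `0` off `Q`). -/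
def MQ (Q : Cube N) (w : (Fin N → ℝ) → ℝ) (x : Fin N → ℝ) : ℝ :=
  sSup ({0} ∪ {t | ∃ R : Cube N, Q.IsDyadicSub R ∧ x ∈ R.set ∧ t = avg R w})

/-- Admissible `A∞` constants of a scalar weight, over a collection `𝒬` of cubes. -/
def AinftyOn (𝒬 : Set (Cube N)) (w : (Fin N → ℝ) → ℝ) : Set ℝ :=
  {C | 0 ≤ C ∧ ∀ Q ∈ 𝒬, avg Q (MQ Q w) ≤ C * avg Q w}

/-- The `A∞` characteristic (best admissible constant) of a scalar weight. -/
def AinftyChar (𝒬 : Set (Cube N)) (w : (Fin N → ℝ) → ℝ) : ℝ := sInf (AinftyOn 𝒬 w)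

/-- The scalar weight `w_e(x) = (W(x)e, e)` associated to a matrix weight and `e ∈ ℝ^d`. -/
def we (W : (Fin N → ℝ) → Matrix (Fin d) (Fin d) ℝ) (e : Fin d → ℝ) :
    (Fin N → ℝ) → ℝ := fun x => e ⬝ᵥ (W x).mulVec e

/-- Admissible constants for the scalar `A∞` characteristic of a matrix weight. -/
def matAinftyScOn (𝒬 : Set (Cube N)) (W : (Fin N → ℝ) → Matrix (Fin d) (Fin d) ℝ) : Set ℝ :=
  {C | 0 ≤ C ∧ ∀ e : Fin d → ℝ, ∀ Q ∈ 𝒬, avg Q (MQ Q (we W e)) ≤ C * avg Q (we W e)}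

/-- The scalar `A∞` characteristic `[W]^{sc}_{A∞} = sup_e [w_e]_{A∞}` of a matrix weight. -/
def matAinftyScChar (𝒬 : Set (Cube N)) (W : (Fin N → ℝ) → Matrix (Fin d) (Fin d) ℝ) : ℝ :=
  sInf (matAinftyScOn 𝒬 W)

/-- Admissible constants for the two-weight matrix `A₂` characteristic
`[W,V]_{A₂} = sup_Q ‖⟨W⟩_Q^{1/2} ⟨V⟩_Q^{1/2}‖²`. -/
def A2pairOn (𝒬 : Set (Cube N)) (W V : (Fin N → ℝ) → Matrix (Fin d) (Fin d) ℝ) : Set ℝ :=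
  {C | ∀ Q ∈ 𝒬, matOpNorm (msqrt (matAvg Q W) * msqrt (matAvg Q V)) ^ 2 ≤ C}

/-- The two-weight matrix `A₂` characteristic. -/
def A2pairChar (𝒬 : Set (Cube N)) (W V : (Fin N → ℝ) → Matrix (Fin d) (Fin d) ℝ) : ℝ :=
  sInf (A2pairOn 𝒬 W V)

/-- Admissible constants for the scalar `A₂` characteristic `sup_Q ⟨w⟩_Q ⟨w⁻¹⟩_Q`. -/
def scalarA2On (𝒬 : Set (Cube N)) (w : (Fin N → ℝ) → ℝ) : Set ℝ :=
  {C | ∀ Q ∈ 𝒬, avg Q w * avg Q (fun x => (w x)⁻¹) ≤ C}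

/-- The scalar `A₂` characteristic. -/
def scalarA2Char (𝒬 : Set (Cube N)) (w : (Fin N → ℝ) → ℝ) : ℝ := sInf (scalarA2On 𝒬 w)

/-- An `ω`-Calderón–Zygmund operator on `ℝ^N`: a linear operator, bounded on `L²`,
with a kernel representation off the support, whose kernel satisfies the standard size
condition and the `ω`-smoothness condition, `ω` being a modulus of continuity. -/
structure CZO (N : ℕ) where
  op : ((Fin N → ℝ) → ℝ) →ₗ[ℝ] ((Fin N → ℝ) → ℝ)
  K : (Fin N → ℝ) → (Fin N → ℝ) → ℝ
  ω : ℝ → ℝ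
  CK : ℝ
  normBound : ℝ
  bounded : ∀ f : (Fin N → ℝ) → ℝ, MemLp f 2 volume →
    MemLp (op f) 2 volume ∧
      eLpNorm (op f) 2 volume ≤ ENNReal.ofReal normBound * eLpNorm f 2 volume
  repr : ∀ f : (Fin N → ℝ) → ℝ, MemLp f 2 volume → ∀ x ∉ tsupport f,
    op f x = ∫ y, K x y * f y
  size : ∀ x y : Fin N → ℝ, x ≠ y → |K x y| ≤ CK / vnorm (x - y) ^ N
  smooth : ∀ x x' y : Fin N → ℝ, x ≠ y → vnorm (x - x') ≤ vnorm (x - y) / 2 →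
    |K x y - K x' y| + |K y x - K y x'| ≤
      ω (vnorm (x - x') / vnorm (x - y)) / vnorm (x - y) ^ N
  omega_zero : ω 0 = 0
  omega_mono : MonotoneOn ω (Set.Ici 0)
  omega_subadd : ∀ s t : ℝ, 0 ≤ s → 0 ≤ t → ω (s + t) ≤ ω s + ω t

/-- The Dini condition `∫₀¹ ω(t) dt/t < ∞` for a modulus of continuity. -/
def Dini (ω : ℝ → ℝ) : Prop :=
  IntegrableOn (fun t => ω t / t) (Set.Ioc (0:ℝ) 1) volume

/-- Componentwise (i.e. `T ⊗ I_d`) action of a scalar operator on vector-valued functions. -/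
def vecApply (T : ((Fin N → ℝ) → ℝ) → ((Fin N → ℝ) → ℝ))
    (f : (Fin N → ℝ) → Fin d → ℝ) : (Fin N → ℝ) → Fin d → ℝ :=
  fun x i => T (fun y => f y i) x

/-- `T` maps `L²` to `L²` with operator norm at most `M`. -/
def L2OpNormLe (T : ((Fin N → ℝ) → ℝ) → ((Fin N → ℝ) → ℝ)) (M : ℝ) : Prop :=
  ∀ f : (Fin N → ℝ) → ℝ, MemLp f 2 volume →
    MemLp (T f) 2 volume ∧ eLpNorm (T f) 2 volume ≤ ENNReal.ofReal M * eLpNorm f 2 volume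

/-- `T` is bounded on `L²`. -/
def L2Bounded (T : ((Fin N → ℝ) → ℝ) → ((Fin N → ℝ) → ℝ)) : Prop :=
  ∃ M : ℝ, L2OpNormLe T M

/-- The family of kernels of a (generalized big) Haar shift of complexity `r`:
`K_Q` is supported on `Q × Q`, bounded by `|Q|⁻¹`, constant on products of
`(r+1)`-st generation dyadic subcubes of `Q`, and vanishes for non-dyadic `Q`. -/
structure HaarShiftKernel (N : ℕ) (r : ℕ) where
  K : Cube N → (Fin N → ℝ) → (Fin N → ℝ) → ℝ
  measK : ∀ Q : Cube N, Measurable (Function.uncurry (K Q))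
  suppK : ∀ Q : Cube N, ∀ x y, K Q x y ≠ 0 → x ∈ Q.set ∧ y ∈ Q.set
  bddK : ∀ Q : Cube N, ∀ x y, |K Q x y| ≤ (Cube.vol Q)⁻¹
  constK : ∀ Q : Cube N, ∀ m m' : Fin N → ℕ,
    (∀ i, m i < 2 ^ (r + 1)) → (∀ i, m' i < 2 ^ (r + 1)) →
    ∀ x x' y y', x ∈ (Q.subCube (r + 1) m).set → x' ∈ (Q.subCube (r + 1) m).set →
      y ∈ (Q.subCube (r + 1) m').set → y' ∈ (Q.subCube (r + 1) m').set →
      K Q x y = K Q x' y'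
  dyadicK : ∀ Q : Cube N, ¬Q.IsDyadic → K Q = 0

/-- The operator `𝕊 = Σ_{Q ∈ D} T_Q` associated to a family of Haar shift kernels. -/
def hsApply {r : ℕ} (S : HaarShiftKernel N r) (f : (Fin N → ℝ) → ℝ) : (Fin N → ℝ) → ℝ :=
  fun x => ∑' Q : Cube N, ∫ y, S.K Q x y * f y

/-- The cancellation conditions `T_Q 1_Q = 0`, `T_Q^* 1_Q = 0` making a generalized
big Haar shift a big Haar shift. -/
def IsBigShift {r : ℕ} (S : HaarShiftKernel N r) : Prop :=
  (∀ Q : Cube N, ∀ x, (∫ y, S.K Q x y) = 0) ∧ (∀ Q : Cube N, ∀ y, (∫ x, S.K Q x y) = 0)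

/-- The sublattice `D̃ = ∪_j D_{k+(r+1)j}` of the dyadic lattice. -/
def Dtilde (N r k : ℕ) : Set (Cube N) :=
  {Q | Q.IsDyadic ∧ ∃ j : ℤ, Q.side = (2:ℝ) ^ (-((k : ℤ) + (r + 1) * j))}

/-- The Haar shift is `r`-separated with lattice parameter `k`:
`T_Q ≠ 0` only for `Q ∈ D̃`. -/
def SeparatedKernel {r : ℕ} (S : HaarShiftKernel N r) (k : ℕ) : Prop :=
  ∀ Q : Cube N, S.K Q ≠ 0 → Q ∈ Dtilde N r k

/-- The martingale difference `Δ_R b = Σ_{R' child of R} ⟨b⟩_{R'} 1_{R'} - ⟨b⟩_R 1_R`. -/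
def haarDelta (R : Cube N) (b : (Fin N → ℝ) → ℝ) (x : Fin N → ℝ) : ℝ :=
  (∑ m : Fin N → Fin 2, Set.indicator (R.subCube 1 fun i => (m i : ℕ)).set
      (fun _ => avg (R.subCube 1 fun i => (m i : ℕ)) b) x)
    - Set.indicator R.set (fun _ => avg R b) x

/-- The paraproduct of order `r` with symbol `b`:
`Π_b^r f = Σ_{Q ∈ D} ⟨f⟩_Q Σ_{R ∈ ch^r Q} Δ_R b`. -/
def paraApply (r : ℕ) (b f : (Fin N → ℝ) → ℝ) : (Fin N → ℝ) → ℝ :=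
  fun x => ∑' Q : dyadicCubes N,
    avg Q.val f * ∑ m : Fin N → Fin (2 ^ r), haarDelta (Q.val.subCube r fun i => (m i : ℕ)) b x

/-- The paraproduct `Π_b^r` is `r`-separated with lattice parameter `k`. -/
def SeparatedPara (r : ℕ) (b : (Fin N → ℝ) → ℝ) (k : ℕ) : Prop :=
  ∀ Q : Cube N, Q.IsDyadic →
    (∃ x, (∑ m : Fin N → Fin (2 ^ r), haarDelta (Q.subCube r fun i => (m i : ℕ)) b x) ≠ 0) →
    Q ∈ Dtilde N r k

/-- `T` is a big Haar shift of complexity `r`, or a paraproduct of order `r`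
with `L²` norm at most `2^{-Nr/2}`. -/
def IsShiftOrParaproduct (N r : ℕ) (T : ((Fin N → ℝ) → ℝ) → ((Fin N → ℝ) → ℝ)) : Prop :=
  (∃ S : HaarShiftKernel N r, IsBigShift S ∧ L2Bounded (hsApply S) ∧ T = hsApply S) ∨
  (∃ b : (Fin N → ℝ) → ℝ, LocallyIntegrable b volume ∧
      L2OpNormLe (paraApply r b) (Real.sqrt ((2:ℝ) ^ (N * r)))⁻¹ ∧ T = paraApply r b)

/-- `T` is an `r`-separated big Haar shift of complexity `r`, or an `r`-separated
paraproduct of order `r` with `L²` norm at most `2^{-Nr/2}`; `k ≤ r` is the lattice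
parameter of the separation sublattice `D̃`. -/
def IsSeparatedShiftOrParaproduct (N r k : ℕ)
    (T : ((Fin N → ℝ) → ℝ) → ((Fin N → ℝ) → ℝ)) : Prop :=
  k ≤ r ∧
  ((∃ S : HaarShiftKernel N r, IsBigShift S ∧ L2Bounded (hsApply S) ∧
      SeparatedKernel S k ∧ T = hsApply S) ∨
   (∃ b : (Fin N → ℝ) → ℝ, LocallyIntegrable b volume ∧
      L2OpNormLe (paraApply r b) (Real.sqrt ((2:ℝ) ^ (N * r)))⁻¹ ∧
      SeparatedPara r b k ∧ T = paraApply r b))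

/-- The convex-body average `⟨⟨f⟩⟩_Q = {⟨φ f⟩_Q : ‖φ‖_∞ ≤ 1}`. -/
def cbAvg (Q : Cube N) (f : (Fin N → ℝ) → Fin d → ℝ) : Set (Fin d → ℝ) :=
  {v | ∃ φ : (Fin N → ℝ) → ℝ, Measurable φ ∧ (∀ x, |φ x| ≤ 1) ∧
        v = fun i => avg Q fun x => φ x * f x i}

/-- A weakly `η`-sparse family of cubes: there are pairwise disjoint measurable
subsets `E_Q ⊆ Q` with `|E_Q| ≥ η |Q|`. -/
def WeaklySparse (S : Set (Cube N)) (η : ℝ) : Prop :=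
  ∃ E : Cube N → Set (Fin N → ℝ),
    (∀ Q ∈ S, E Q ⊆ Q.set ∧ MeasurableSet (E Q) ∧ ENNReal.ofReal (η * Q.vol) ≤ volume (E Q)) ∧
    S.PairwiseDisjoint E

/-- The value at `x` of the convex-body sparse operator
`𝐋_S f = Σ_{Q ∈ S} ⟨⟨f⟩⟩_Q 1_Q` (an infinite Minkowski sum): all convergent sums
`Σ_Q g(Q)` with `g(Q) ∈ ⟨⟨f⟩⟩_Q` whenever `Q ∈ S` contains `x`, and `g(Q) = 0` otherwise. -/
def sparseBody (S : Set (Cube N)) (f : (Fin N → ℝ) → Fin d → ℝ) (x : Fin N → ℝ) :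
    Set (Fin d → ℝ) :=
  {v | ∃ g : Cube N → Fin d → ℝ,
        (∀ Q : Cube N, Q ∈ S ∧ x ∈ Q.set → g Q ∈ cbAvg Q f) ∧
        (∀ Q : Cube N, ¬(Q ∈ S ∧ x ∈ Q.set) → g Q = 0) ∧ HasSum g v}

/-- The `S`-children of `Q`: maximal cubes of `S` strictly contained in `Q`. -/
def sChildren (S : Set (Cube N)) (Q : Cube N) : Set (Cube N) :=
  {R | R ∈ S ∧ R.set ⊂ Q.set ∧ ¬∃ R' ∈ S, R.set ⊂ R'.set ∧ R'.set ⊂ Q.set}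

/-- A classical `ε`-sparse family of dyadic cubes: `Σ_{R ∈ ch_S(Q)} |R| ≤ ε |Q|`. -/
def EpsSparse (S : Set (Cube N)) (ε : ℝ) : Prop :=
  (∀ Q ∈ S, Q.IsDyadic) ∧
  ∀ Q ∈ S, ∀ F : Finset (Cube N), ↑F ⊆ sChildren S Q → ∑ R ∈ F, R.vol ≤ ε * Q.vol

/-- A dyadic `λ`-Carleson family: `Σ_{R ∈ S, R ⊆ Q} |R| ≤ λ |Q|` for all `Q ∈ S`. -/
def DyadicCarleson (S : Set (Cube N)) (lam : ℝ) : Prop :=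
  (∀ Q ∈ S, Q.IsDyadic) ∧
  ∀ Q ∈ S, ∀ F : Finset (Cube N), (↑F ⊆ {R | R ∈ S ∧ R.set ⊆ Q.set}) →
    ∑ R ∈ F, R.vol ≤ lam * Q.vol

/-- A simple sparse family: every cube of `S` has at most one `S`-child. -/
def SimpleSparse (S : Set (Cube N)) : Prop :=
  (∀ Q ∈ S, Q.IsDyadic) ∧ ∀ Q ∈ S, (sChildren S Q).Subsingleton

end CBD

end
namespace CBD

section AuxLemmas

variable {N d : ℕ}


namespace Cube

lemma set_eq_pi (Q : Cube N) :
    Q.set = Set.pi Set.univ (fun i => Set.Ico (Q.corner i) (Q.corner i + Q.side)) := by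
  ext x; simp [Cube.set, Set.mem_pi, Set.mem_Ico]

lemma measurableSet_set (Q : Cube N) : MeasurableSet Q.set := by
  rw [Q.set_eq_pi]; exact MeasurableSet.univ_pi fun i => measurableSet_Ico

lemma vol_pos (Q : Cube N) : 0 < Q.vol := pow_pos Q.side_pos N

lemma volume_set (Q : Cube N) : volume Q.set = ENNReal.ofReal Q.vol := by
  rw [Q.set_eq_pi, volume_pi_pi]
  simp only [Real.volume_Ico, add_sub_cancel_left]
  rw [Finset.prod_const, Finset.card_univ, Fintype.card_fin, Cube.vol,
    ENNReal.ofReal_pow Q.side_pos.le]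

lemma volume_set_lt_top (Q : Cube N) : volume Q.set < ⊤ := by
  rw [Q.volume_set]; exact ENNReal.ofReal_lt_top

lemma abs_sub_lt_side {Q : Cube N} {x y : Fin N → ℝ}
    (hx : x ∈ Q.set) (hy : y ∈ Q.set) (i : Fin N) : |x i - y i| < Q.side := by
  rcases hx i with ⟨h1, h2⟩; rcases hy i with ⟨h3, h4⟩
  rw [abs_sub_lt_iff]; constructor <;> linarith

lemma norm_sub_le_side {Q : Cube N} {x y : Fin N → ℝ}
    (hx : x ∈ Q.set) (hy : y ∈ Q.set) : ‖x - y‖ ≤ Q.side := by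
  rw [pi_norm_le_iff_of_nonneg Q.side_pos.le]
  intro i
  simpa [Real.norm_eq_abs] using (Cube.abs_sub_lt_side hx hy i).le

end Cube

section Aux

variable {f : (Fin N → ℝ) → Fin d → ℝ}

lemma integrableOn_mul_comp (hf : Integrable f volume) {φ : (Fin N → ℝ) → ℝ}
    (hφm : Measurable φ) (hφ1 : ∀ x, |φ x| ≤ 1) (i : Fin d) (s : Set (Fin N → ℝ)) :
    IntegrableOn (fun y => φ y * f y i) s volume := by
  have hfi : Integrable (fun y => f y i) volume :=
    (ContinuousLinearMap.proj (R := ℝ) (φ := fun _ : Fin d => ℝ) i).integrable_comp hf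
  exact (hfi.bdd_mul (c := 1) hφm.aestronglyMeasurable
    (ae_of_all _ fun x => by simpa [Real.norm_eq_abs] using hφ1 x)).integrableOn

lemma cbAvg_norm_le (hf : Integrable f volume) {Q : Cube N} {v : Fin d → ℝ}
    (hv : v ∈ cbAvg Q f) : ‖v‖ ≤ Q.vol⁻¹ * ∫ y in Q.set, ‖f y‖ := by
  obtain ⟨φ, hφm, hφ1, rfl⟩ := hv
  have hA : 0 ≤ ∫ y in Q.set, ‖f y‖ :=
    setIntegral_nonneg Q.measurableSet_set (fun x _ => norm_nonneg _)
  have hvol : (0:ℝ) ≤ Q.vol⁻¹ := inv_nonneg.2 Q.vol_pos.le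
  rw [pi_norm_le_iff_of_nonneg (mul_nonneg hvol hA)]
  intro i
  have hint := integrableOn_mul_comp hf hφm hφ1 i Q.set
  show ‖avg Q fun x => φ x * f x i‖ ≤ Q.vol⁻¹ * ∫ y in Q.set, ‖f y‖
  rw [avg, Real.norm_eq_abs, abs_mul, abs_of_nonneg hvol]
  refine mul_le_mul_of_nonneg_left ?_ hvol
  calc |∫ y in Q.set, φ y * f y i| ≤ ∫ y in Q.set, ‖φ y * f y i‖ := by
        simpa [Real.norm_eq_abs] using
          norm_integral_le_integral_norm (μ := volume.restrict Q.set) (fun y => φ y * f y i)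
  _ ≤ ∫ y in Q.set, ‖f y‖ := by
      refine setIntegral_mono_on hint.norm hf.norm.integrableOn Q.measurableSet_set
        (fun x _ => ?_)
      rw [norm_mul]
      calc ‖φ x‖ * ‖f x i‖ ≤ 1 * ‖f x i‖ :=
            mul_le_mul_of_nonneg_right (by simpa [Real.norm_eq_abs] using hφ1 x) (norm_nonneg _)
      _ = ‖f x i‖ := one_mul _
      _ ≤ ‖f x‖ := norm_le_pi_norm _ i

lemma cbAvg_smul_add_mem (hf : Integrable f volume) {Q : Cube N} {u v : Fin d → ℝ}
    (hu : u ∈ cbAvg Q f) (hv : v ∈ cbAvg Q f) {a b : ℝ} (ha : 0 ≤ a) (hb : 0 ≤ b)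
    (hab : a + b = 1) : a • u + b • v ∈ cbAvg Q f := by
  obtain ⟨φ, hφm, hφ1, rfl⟩ := hu
  obtain ⟨ψ, hψm, hψ1, rfl⟩ := hv
  refine ⟨fun x => a * φ x + b * ψ x, (hφm.const_mul a).add (hψm.const_mul b),
    fun x => ?_, ?_⟩
  · calc |a * φ x + b * ψ x| ≤ |a * φ x| + |b * ψ x| := abs_add_le _ _
    _ = a * |φ x| + b * |ψ x| := by rw [abs_mul, abs_mul, abs_of_nonneg ha, abs_of_nonneg hb]
    _ ≤ a * 1 + b * 1 := add_le_add (mul_le_mul_of_nonneg_left (hφ1 x) ha)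
          (mul_le_mul_of_nonneg_left (hψ1 x) hb)
    _ = 1 := by rw [mul_one, mul_one, hab]
  · funext i
    have h1 := integrableOn_mul_comp hf hφm hφ1 i Q.set
    have h2 := integrableOn_mul_comp hf hψm hψ1 i Q.set
    have key : (fun x => (a * φ x + b * ψ x) * f x i)
        = fun x => a * (φ x * f x i) + b * (ψ x * f x i) := by funext x; ring
    show a * avg Q (fun x => φ x * f x i) + b * avg Q (fun x => ψ x * f x i)
        = avg Q fun x => (a * φ x + b * ψ x) * f x i
    rw [avg, avg, avg, key, integral_add (h1.const_mul a) (h2.const_mul b),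
      integral_const_mul, integral_const_mul]
    ring

lemma cbAvg_neg_mem {Q : Cube N} {v : Fin d → ℝ} (hv : v ∈ cbAvg Q f) :
    -v ∈ cbAvg Q f := by
  obtain ⟨φ, hφm, hφ1, rfl⟩ := hv
  refine ⟨fun x => -φ x, hφm.neg, fun x => by simpa using hφ1 x, ?_⟩
  funext i
  show -avg Q (fun x => φ x * f x i) = avg Q fun x => -φ x * f x i
  rw [avg, avg, show (fun x => -φ x * f x i) = fun x => -(φ x * f x i) by funext x; ring,
    integral_neg]
  ring

lemma sparseBody_convex (hf : Integrable f volume) (S : Set (Cube N)) (x : Fin N → ℝ) :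
    Convex ℝ (sparseBody S f x) := by
  rintro u ⟨g1, hg1mem, hg1zero, hg1sum⟩ v ⟨g2, hg2mem, hg2zero, hg2sum⟩ a b ha hb hab
  refine ⟨fun Q => a • g1 Q + b • g2 Q, ?_, ?_, ?_⟩
  · intro Q hQ; exact cbAvg_smul_add_mem hf (hg1mem Q hQ) (hg2mem Q hQ) ha hb hab
  · intro Q hQ
    show a • g1 Q + b • g2 Q = 0
    rw [hg1zero Q hQ, hg2zero Q hQ, smul_zero, smul_zero, add_zero]
  · exact (hg1sum.const_smul a).add (hg2sum.const_smul b)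

lemma sparseBody_neg_mem (S : Set (Cube N)) (x : Fin N → ℝ) {v : Fin d → ℝ}
    (hv : v ∈ sparseBody S f x) : -v ∈ sparseBody S f x := by
  obtain ⟨g, hgmem, hgzero, hgsum⟩ := hv
  refine ⟨fun Q => -g Q, ?_, ?_, hgsum.neg⟩
  · intro Q hQ; exact cbAvg_neg_mem (hgmem Q hQ)
  · intro Q hQ
    show -g Q = 0
    rw [hgzero Q hQ, neg_zero]

end Aux

section Bounded

variable {f : (Fin N → ℝ) → Fin d → ℝ} {S : Set (Cube N)} {η : ℝ}

lemma sparseBody_ae_bounded (hη : 0 < η) (hS : WeaklySparse S η)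
    (hf : Integrable f volume) (hsupp : HasCompactSupport f) :
    ∀ᵐ x ∂(volume : Measure (Fin N → ℝ)), Bornology.IsBounded (sparseBody S f x) := by
  classical
  obtain ⟨E, hE, hdisj⟩ := hS
  set A : Cube N → ℝ := fun Q => ∫ y in Q.set, ‖f y‖ with hAdef
  have hA0 : ∀ Q : Cube N, 0 ≤ A Q := fun Q =>
    setIntegral_nonneg Q.measurableSet_set (fun x _ => norm_nonneg _)
  set I : ℝ := ∫ y, ‖f y‖ with hIdef
  have hI0 : 0 ≤ I := integral_nonneg (fun y => norm_nonneg _)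
  have hAle : ∀ Q : Cube N, A Q ≤ I := fun Q =>
    setIntegral_le_integral hf.norm (Filter.Eventually.of_forall fun y => norm_nonneg _)
  obtain ⟨R, hR⟩ := (hsupp : IsCompact (tsupport f)).isBounded.subset_closedBall 0
  set U : Set (Fin N → ℝ) := Metric.closedBall 0 (R + 1) with hUdef
  have hU : volume U ≠ ⊤ := (isCompact_closedBall (0 : Fin N → ℝ) (R + 1)).measure_lt_top.ne
  -- small relevant cubes lie in U
  have hsubU : ∀ Q : Cube N, Q.vol ≤ 1 → A Q ≠ 0 → Q.set ⊆ U := by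
    intro Q hv hAne y hy
    have hzex : ∃ z ∈ Q.set, z ∈ tsupport f := by
      by_contra h
      push_neg at h
      refine hAne (setIntegral_eq_zero_of_forall_eq_zero fun z hz => ?_)
      rw [image_eq_zero_of_notMem_tsupport (h z hz), norm_zero]
    obtain ⟨z, hz, hzs⟩ := hzex
    have h1 : ‖y - z‖ ≤ 1 := by
      rw [pi_norm_le_iff_of_nonneg zero_le_one]
      intro i
      have hside : Q.side ≤ 1 := by
        exact (pow_le_one_iff_of_nonneg Q.side_pos.le (Fin.pos i).ne').mp hv
      have := Cube.abs_sub_lt_side hy hz i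
      simp only [Pi.sub_apply, Real.norm_eq_abs]
      linarith
    have hz' : ‖z‖ ≤ R := mem_closedBall_zero_iff.mp (hR hzs)
    have hy' : ‖y‖ ≤ R + 1 := by
      calc ‖y‖ = ‖y - z + z‖ := by rw [sub_add_cancel]
      _ ≤ ‖y - z‖ + ‖z‖ := norm_add_le _ _
      _ ≤ 1 + R := add_le_add h1 hz'
      _ = R + 1 := add_comm _ _
    exact mem_closedBall_zero_iff.mpr hy'
  -- the collection of small relevant cubes
  set 𝒞 : Set (Cube N) := {Q | Q ∈ S ∧ Q.vol ≤ 1 ∧ A Q ≠ 0} with h𝒞def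
  have hcount : 𝒞.Countable := by
    set As : Cube N → Set (Fin N → ℝ) := fun Q => if Q ∈ S then E Q else ∅ with hAs
    have hmble : ∀ Q, MeasurableSet (As Q) := by
      intro Q
      by_cases h : Q ∈ S
      · simpa [hAs, h] using (hE Q h).2.1
      · simp [hAs, h]
    have hdisj' : Pairwise (Function.onFun Disjoint As) := by
      intro Q Q' hne
      by_cases h : Q ∈ S <;> by_cases h' : Q' ∈ S <;>
        simp only [Function.onFun, hAs, h, h', if_true, if_false] <;>
        first
          | exact hdisj h h' hne
          | exact disjoint_bot_right
          | exact disjoint_bot_left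
    refine Set.Countable.mono ?_
      (Measure.countable_meas_pos_of_disjoint_iUnion (μ := volume) hmble hdisj')
    intro Q hQ
    have h1 : Q ∈ S := hQ.1
    have : 0 < volume (E Q) :=
      lt_of_lt_of_le (ENNReal.ofReal_pos.mpr (mul_pos hη Q.vol_pos)) (hE Q h1).2.2
    simpa [hAs, h1] using this
  haveI : Countable ↥𝒞 := hcount.to_subtype
  -- counting function is a.e. finite
  set g : (Fin N → ℝ) → ℝ≥0∞ :=
    fun x => ∑' Q : 𝒞, (Q : Cube N).set.indicator (fun _ => (1 : ℝ≥0∞)) x with hgdef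
  have hgm : Measurable g :=
    Measurable.ennreal_tsum fun Q => measurable_const.indicator (Cube.measurableSet_set _)
  have hdisjsub : Pairwise (Function.onFun Disjoint fun Q : 𝒞 => E (Q : Cube N)) := by
    intro Q Q' hne
    exact hdisj Q.2.1 Q'.2.1 (fun h => hne (Subtype.ext h))
  have hgint : ∫⁻ x, g x ∂volume ≠ ⊤ := by
    have hswap : ∫⁻ x, g x ∂volume = ∑' Q : 𝒞,
        ∫⁻ x, (Q : Cube N).set.indicator (fun _ => (1 : ℝ≥0∞)) x ∂volume :=
      lintegral_tsum (fun Q => (measurable_const.indicator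
        (Cube.measurableSet_set (Q : Cube N))).aemeasurable)
    rw [hswap, ← lt_top_iff_ne_top]
    have hterm : ∀ Q : 𝒞, (∫⁻ x, (Q : Cube N).set.indicator (fun _ => (1 : ℝ≥0∞)) x ∂volume)
        = volume (Q : Cube N).set := fun Q =>
      lintegral_indicator_one (Cube.measurableSet_set (Q : Cube N))
    have hle : ∀ Q : 𝒞, volume (Q : Cube N).set ≤ ENNReal.ofReal η⁻¹ * volume (E Q) := by
      intro Q
      rw [(Q : Cube N).volume_set]
      calc ENNReal.ofReal (Q : Cube N).vol
          = ENNReal.ofReal (η⁻¹ * (η * (Q : Cube N).vol)) := by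
            rw [← mul_assoc, inv_mul_cancel₀ hη.ne', one_mul]
      _ = ENNReal.ofReal η⁻¹ * ENNReal.ofReal (η * (Q : Cube N).vol) :=
            ENNReal.ofReal_mul (inv_nonneg.2 hη.le)
      _ ≤ ENNReal.ofReal η⁻¹ * volume (E Q) := by
            exact mul_le_mul_right (hE _ Q.2.1).2.2 _
    calc (∑' Q : 𝒞, ∫⁻ x, (Q : Cube N).set.indicator (fun _ => (1 : ℝ≥0∞)) x ∂volume)
        = ∑' Q : 𝒞, volume (Q : Cube N).set := by simp_rw [hterm]
    _ ≤ ∑' Q : 𝒞, ENNReal.ofReal η⁻¹ * volume (E (Q : Cube N)) := ENNReal.tsum_le_tsum hle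
    _ = ENNReal.ofReal η⁻¹ * ∑' Q : 𝒞, volume (E (Q : Cube N)) := ENNReal.tsum_mul_left
    _ = ENNReal.ofReal η⁻¹ * volume (⋃ Q : 𝒞, E (Q : Cube N)) := by
          rw [measure_iUnion hdisjsub (fun Q => (hE _ Q.2.1).2.1)]
    _ ≤ ENNReal.ofReal η⁻¹ * volume U := by
          refine mul_le_mul_right (measure_mono ?_) _
          refine Set.iUnion_subset fun Q => ?_
          exact ((hE _ Q.2.1).1).trans (hsubU _ Q.2.2.1 Q.2.2.2)
    _ < ⊤ := ENNReal.mul_lt_top ENNReal.ofReal_lt_top (lt_top_iff_ne_top.mpr hU)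
  -- conclusion, pointwise at good x
  filter_upwards [ae_lt_top hgm hgint] with x hx
  -- the small relevant cubes containing x form a finite set
  have hFin : {Q : Cube N | Q ∈ 𝒞 ∧ x ∈ Q.set}.Finite := by
    by_contra hinf
    have hinf' : {Q : Cube N | Q ∈ 𝒞 ∧ x ∈ Q.set}.Infinite := hinf
    obtain ⟨n, hn⟩ := ENNReal.exists_nat_gt hx.ne
    obtain ⟨F, hFsub, hFcard⟩ := hinf'.exists_subset_card_eq (n + 1)
    have hge : ((n : ℝ≥0∞) + 1) ≤ g x := by
      set F' : Finset ↥𝒞 := F.subtype (· ∈ 𝒞) with hF'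
      have hcard' : F'.card = n + 1 := by
        rw [hF', Finset.card_subtype, Finset.filter_true_of_mem
          (fun Q hQ => (hFsub hQ).1), hFcard]
      have : ∀ Q ∈ F', (Q : Cube N).set.indicator (fun _ => (1 : ℝ≥0∞)) x = 1 := by
        intro Q hQ
        rw [hF', Finset.mem_subtype] at hQ
        exact Set.indicator_of_mem (hFsub hQ).2 _
      calc ((n : ℝ≥0∞) + 1) = ∑ _Q ∈ F', (1 : ℝ≥0∞) := by
            rw [Finset.sum_const, hcard']
            simp [Nat.cast_add]
      _ = ∑ Q ∈ F', (Q : Cube N).set.indicator (fun _ => (1 : ℝ≥0∞)) x :=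
            (Finset.sum_congr rfl this).symm
      _ ≤ g x := ENNReal.sum_le_tsum F'
    have : g x < (n : ℝ≥0∞) + 1 := lt_of_lt_of_le hn le_self_add
    exact absurd (lt_of_lt_of_le this hge) (lt_irrefl _)
  set 𝒯 : Finset (Cube N) := hFin.toFinset with h𝒯
  set Csmall : ℝ := ∑ Q ∈ 𝒯, Q.vol⁻¹ * A Q with hCsmall
  -- bound for the big cubes
  have hbig : ∃ B : ℝ, ∀ F : Finset (Cube N),
      (∀ Q ∈ F, Q ∈ S ∧ x ∈ Q.set ∧ 1 < Q.vol) →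
      ∑ Q ∈ F, Q.vol⁻¹ * A Q ≤ B := by
    rcases Nat.eq_zero_or_pos N with hN | hN
    · refine ⟨0, fun F hF => ?_⟩
      have hFe : F = ∅ := Finset.eq_empty_of_forall_notMem (fun Q hQ => by
        have h1 := (hF Q hQ).2.2
        rw [Cube.vol] at h1
        have h2 : ∀ n : ℕ, n = 0 → (1 : ℝ) < Q.side ^ n → False := by
          rintro n rfl h
          rw [pow_zero] at h
          exact lt_irrefl _ h
        exact h2 N hN h1)
      simp [hFe]
    · set C0 : ℝ := (2 : ℝ) ^ (2 * N) * (1 + ‖x‖) ^ (2 * N) with hC0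
      have hC0pos : 0 < C0 := by positivity
      set G : (Fin N → ℝ) → ℝ := fun y => C0 * ((1 + ‖y‖) ^ (2 * N))⁻¹ with hG
      have hGint : Integrable G volume := by
        have h1 : Integrable (fun y : Fin N → ℝ => (1 + ‖y‖) ^ (-((2 * N : ℕ) : ℝ)))
            volume := by
          refine integrable_one_add_norm ?_
          rw [Module.finrank_fin_fun]
          have hN1 : (1 : ℝ) ≤ (N : ℝ) := by exact_mod_cast hN
          push_cast
          nlinarith
        have h2 : (fun y : Fin N → ℝ => ((1 + ‖y‖) ^ (2 * N))⁻¹)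
            = fun y : Fin N → ℝ => (1 + ‖y‖) ^ (-((2 * N : ℕ) : ℝ)) := by
          funext y
          rw [Real.rpow_neg (by positivity), Real.rpow_natCast]
        rw [hG]
        refine (h1.const_mul C0).congr (Filter.Eventually.of_forall fun y => ?_)
        show C0 * (1 + ‖y‖) ^ (-((2 * N : ℕ) : ℝ)) = C0 * ((1 + ‖y‖) ^ (2 * N))⁻¹
        rw [Real.rpow_neg (by positivity), Real.rpow_natCast]
      have hG0 : ∀ y, 0 ≤ G y := fun y => by rw [hG]; positivity
      refine ⟨I * (η⁻¹ * ∫ y, G y), fun F hF => ?_⟩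
      have hEQ : ∀ Q ∈ F, E Q ⊆ Q.set ∧ MeasurableSet (E Q) ∧
          ENNReal.ofReal (η * Q.vol) ≤ volume (E Q) := fun Q hQ => hE Q (hF Q hQ).1
      -- per-cube estimate
      have key : ∀ Q ∈ F, Q.vol⁻¹ ≤ η⁻¹ * ∫ y in E Q, G y := by
        intro Q hQ
        obtain ⟨hQS, hxQ, hv⟩ := hF Q hQ
        obtain ⟨hEsub, hEm, hEvol⟩ := hEQ Q hQ
        have hμE : volume (E Q) ≠ ⊤ :=
          (lt_of_le_of_lt (measure_mono hEsub) Q.volume_set_lt_top).ne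
        have htoReal : η * Q.vol ≤ (volume (E Q)).toReal :=
          (ENNReal.ofReal_le_iff_le_toReal hμE).mp hEvol
        have hside1 : 1 ≤ Q.side := by
          by_contra h
          push_neg at h
          have : Q.vol ≤ 1 := pow_le_one₀ Q.side_pos.le h.le
          linarith
        have hpt : ∀ y ∈ E Q, (Q.vol⁻¹ * Q.vol⁻¹ : ℝ) ≤ G y := by
          intro y hy
          have hyQ := hEsub hy
          have hd : ‖y - x‖ ≤ Q.side := Cube.norm_sub_le_side hyQ hxQ
          have hyn : ‖y‖ ≤ ‖y - x‖ + ‖x‖ := by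
            calc ‖y‖ = ‖y - x + x‖ := by rw [sub_add_cancel]
            _ ≤ ‖y - x‖ + ‖x‖ := norm_add_le _ _
          have h1y : 1 + ‖y‖ ≤ 2 * Q.side * (1 + ‖x‖) := by
            nlinarith [norm_nonneg x, norm_nonneg (y - x)]
          have hpow : (1 + ‖y‖) ^ (2 * N) ≤ C0 * (Q.side ^ N * Q.side ^ N) := by
            calc (1 + ‖y‖) ^ (2 * N) ≤ (2 * Q.side * (1 + ‖x‖)) ^ (2 * N) :=
                  pow_le_pow_left₀ (by positivity) h1y _
            _ = C0 * (Q.side ^ N * Q.side ^ N) := by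
                  rw [hC0, mul_pow, mul_pow, ← pow_add]
                  ring
          have hvolpow : Q.vol * Q.vol = Q.side ^ N * Q.side ^ N := by rw [Cube.vol]
          have hbase : (0 : ℝ) < (1 + ‖y‖) ^ (2 * N) := by positivity
          have hvv : (0 : ℝ) < Q.vol * Q.vol := mul_pos Q.vol_pos Q.vol_pos
          rw [hG, ← mul_inv]
          have hdiv : (1 + ‖y‖) ^ (2 * N) / C0 ≤ Q.vol * Q.vol := by
            rw [div_le_iff₀ hC0pos]
            calc (1 + ‖y‖) ^ (2 * N) ≤ C0 * (Q.side ^ N * Q.side ^ N) := hpow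
            _ = Q.vol * Q.vol * C0 := by rw [hvolpow]; ring
          calc (Q.vol * Q.vol)⁻¹ ≤ ((1 + ‖y‖) ^ (2 * N) / C0)⁻¹ :=
                inv_anti₀ (by positivity) hdiv
          _ = C0 * ((1 + ‖y‖) ^ (2 * N))⁻¹ := by
                rw [inv_div, div_eq_mul_inv, mul_comm]
        have hconst : ∫ _y in E Q, (Q.vol⁻¹ * Q.vol⁻¹ : ℝ) ∂volume
            = (volume (E Q)).toReal * (Q.vol⁻¹ * Q.vol⁻¹) := by
          rw [setIntegral_const, smul_eq_mul, measureReal_def]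
        have hmono : ∫ _y in E Q, (Q.vol⁻¹ * Q.vol⁻¹ : ℝ) ∂volume ≤ ∫ y in E Q, G y := by
          refine setIntegral_mono_on ?_ hGint.integrableOn hEm hpt
          exact (integrableOn_const_iff (C := (Q.vol⁻¹ * Q.vol⁻¹ : ℝ))).mpr (Or.inr (lt_top_iff_ne_top.mpr hμE))
        calc Q.vol⁻¹ = (Q.vol⁻¹ * Q.vol⁻¹) * Q.vol := by
              field_simp
        _ ≤ (Q.vol⁻¹ * Q.vol⁻¹) * (η⁻¹ * (volume (E Q)).toReal) := by
              refine mul_le_mul_of_nonneg_left ?_ (by positivity)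
              rw [le_inv_mul_iff₀ hη]
              exact htoReal
        _ = η⁻¹ * ((volume (E Q)).toReal * (Q.vol⁻¹ * Q.vol⁻¹)) := by ring
        _ = η⁻¹ * ∫ _y in E Q, (Q.vol⁻¹ * Q.vol⁻¹ : ℝ) ∂volume := by rw [hconst]
        _ ≤ η⁻¹ * ∫ y in E Q, G y :=
              mul_le_mul_of_nonneg_left hmono (inv_nonneg.2 hη.le)
      -- sum the per-cube estimates
      have hsum2 : ∑ Q ∈ F, Q.vol⁻¹ ≤ η⁻¹ * ∫ y, G y := by
        have hstep : ∑ Q ∈ F, Q.vol⁻¹ ≤ ∑ Q ∈ F, η⁻¹ * ∫ y in E Q, G y :=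
          Finset.sum_le_sum key
        have hunion : ∑ Q ∈ F, ∫ y in E Q, G y = ∫ y in ⋃ Q ∈ F, E Q, G y := by
          refine (integral_biUnion_finset F (fun Q hQ => (hEQ Q hQ).2.1) ?_
            (fun Q hQ => hGint.integrableOn)).symm
          intro Q hQ Q' hQ' hne
          exact hdisj (hF Q hQ).1 (hF Q' hQ').1 hne
        have hle2 : ∫ y in ⋃ Q ∈ F, E Q, G y ≤ ∫ y, G y :=
          setIntegral_le_integral hGint (Filter.Eventually.of_forall hG0)
        calc ∑ Q ∈ F, Q.vol⁻¹ ≤ ∑ Q ∈ F, η⁻¹ * ∫ y in E Q, G y := hstep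
        _ = η⁻¹ * ∑ Q ∈ F, ∫ y in E Q, G y := by rw [Finset.mul_sum]
        _ = η⁻¹ * ∫ y in ⋃ Q ∈ F, E Q, G y := by rw [hunion]
        _ ≤ η⁻¹ * ∫ y, G y := mul_le_mul_of_nonneg_left hle2 (inv_nonneg.2 hη.le)
      calc ∑ Q ∈ F, Q.vol⁻¹ * A Q ≤ ∑ Q ∈ F, Q.vol⁻¹ * I :=
            Finset.sum_le_sum (fun Q _ =>
              mul_le_mul_of_nonneg_left (hAle Q) (inv_nonneg.2 Q.vol_pos.le))
      _ = I * ∑ Q ∈ F, Q.vol⁻¹ := by rw [Finset.mul_sum]; exact Finset.sum_congr rfl fun Q _ => mul_comm _ _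
      _ ≤ I * (η⁻¹ * ∫ y, G y) := mul_le_mul_of_nonneg_left hsum2 hI0
  obtain ⟨B, hB⟩ := hbig
  -- master bound for arbitrary finite families of cubes of S containing x
  have master : ∀ F : Finset (Cube N), (∀ Q ∈ F, Q ∈ S ∧ x ∈ Q.set) →
      ∑ Q ∈ F, Q.vol⁻¹ * A Q ≤ Csmall + B := by
    intro F hFQ
    have hsplit := (Finset.sum_filter_add_sum_filter_not F (fun Q => Q.vol ≤ 1)
      (fun Q => Q.vol⁻¹ * A Q)).symm
    rw [hsplit]
    refine add_le_add ?_ ?_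
    · -- small part
      set F1 := F.filter (fun Q => Q.vol ≤ 1) with hF1
      have heq : ∑ Q ∈ F1.filter (fun Q => A Q ≠ 0), Q.vol⁻¹ * A Q
          = ∑ Q ∈ F1, Q.vol⁻¹ * A Q := by
        refine Finset.sum_filter_of_ne ?_
        intro Q _ hne hA
        exact hne (by rw [hA, mul_zero])
      rw [← heq, hCsmall]
      refine Finset.sum_le_sum_of_subset_of_nonneg ?_
        (fun Q _ _ => mul_nonneg (inv_nonneg.2 Q.vol_pos.le) (hA0 Q))
      intro Q hQ
      rw [Finset.mem_filter] at hQ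
      obtain ⟨hQ1, hQA⟩ := hQ
      rw [hF1, Finset.mem_filter] at hQ1
      obtain ⟨hQF, hQv⟩ := hQ1
      rw [h𝒯, Set.Finite.mem_toFinset]
      exact ⟨⟨(hFQ Q hQF).1, hQv, hQA⟩, (hFQ Q hQF).2⟩
    · -- big part
      refine hB _ ?_
      intro Q hQ
      rw [Finset.mem_filter] at hQ
      exact ⟨(hFQ Q hQ.1).1, (hFQ Q hQ.1).2, not_le.mp hQ.2⟩
  -- conclude boundedness
  rw [isBounded_iff_forall_norm_le]
  refine ⟨Csmall + B, ?_⟩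
  rintro v ⟨gv, hgmem, hgzero, hgsum⟩
  have hpartial : ∀ F : Finset (Cube N), ‖∑ Q ∈ F, gv Q‖ ≤ Csmall + B := by
    intro F
    have h1 : ‖∑ Q ∈ F, gv Q‖ ≤ ∑ Q ∈ F, ‖gv Q‖ := norm_sum_le F gv
    have h2 : ∑ Q ∈ F.filter (fun Q => Q ∈ S ∧ x ∈ Q.set), ‖gv Q‖
        = ∑ Q ∈ F, ‖gv Q‖ := by
      refine Finset.sum_filter_of_ne ?_
      intro Q _ hne
      by_contra h
      exact hne (by rw [hgzero Q h, norm_zero])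
    have h3 : ∑ Q ∈ F.filter (fun Q => Q ∈ S ∧ x ∈ Q.set), ‖gv Q‖
        ≤ ∑ Q ∈ F.filter (fun Q => Q ∈ S ∧ x ∈ Q.set), Q.vol⁻¹ * A Q := by
      refine Finset.sum_le_sum (fun Q hQ => ?_)
      rw [Finset.mem_filter] at hQ
      exact cbAvg_norm_le hf (hgmem Q hQ.2)
    have h4 := master (F.filter (fun Q => Q ∈ S ∧ x ∈ Q.set))
      (fun Q hQ => (Finset.mem_filter.mp hQ).2)
    calc ‖∑ Q ∈ F, gv Q‖ ≤ ∑ Q ∈ F, ‖gv Q‖ := h1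
    _ = ∑ Q ∈ F.filter (fun Q => Q ∈ S ∧ x ∈ Q.set), ‖gv Q‖ := h2.symm
    _ ≤ ∑ Q ∈ F.filter (fun Q => Q ∈ S ∧ x ∈ Q.set), Q.vol⁻¹ * A Q := h3
    _ ≤ Csmall + B := h4
  have ht : Filter.Tendsto (fun F : Finset (Cube N) => ∑ Q ∈ F, gv Q)
      Filter.atTop (nhds v) := hgsum
  exact le_of_tendsto ht.norm (Filter.Eventually.of_forall hpartial)

end Bounded

end AuxLemmas


/-- For a weakly sparse family `S` and compactly supported `f ∈ L¹`,
for a.e. `x` the set `𝐋_S f(x)` is a bounded convex symmetric subset of `ℝ^d`. -/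
theorem sparseBody_bounded_convex_symmetric
    (N d : ℕ) (η : ℝ) (hη : 0 < η) (hη' : η < 1)
    (S : Set (Cube N)) (hS : WeaklySparse S η)
    (f : (Fin N → ℝ) → Fin d → ℝ) (hf : Integrable f volume) (hsupp : HasCompactSupport f) :
    ∀ᵐ x ∂(volume : Measure (Fin N → ℝ)),
      Convex ℝ (sparseBody S f x) ∧
      (∀ v ∈ sparseBody S f x, -v ∈ sparseBody S f x) ∧
      Bornology.IsBounded (sparseBody S f x) := by
  filter_upwards [sparseBody_ae_bounded hη hS hf hsupp] with x hx
  exact ⟨sparseBody_convex hf S x, fun v hv => sparseBody_neg_mem S x hv, hx⟩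

end CBD
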